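/- Let A be a unital Banach algebra over ℂ and let X ∈ A be such that ‖exp(θ • X)‖ ≤ 1 for every θ ∈ [0,1]. Then ‖ exp(X) − Σ_{k=0}^{3} X^k / k! ‖ ≤ ‖X‖⁴ / 24. -/

import Mathlib

open NormedSpace

private lemma taylor_tail_bound {A : Type*} [NormedRing A] [NormedAlgebra ℂ A]
    [CompleteSpace A] [NormOneClass A] (X : A)
    (hX : ∀ θ ∈ Set.Icc (0 : ℝ) 1, ‖exp (θ • X)‖ ≤ 1) :
    ∀ n : ℕ, ∀ θ ∈ Set.Icc (0 : ℝ) 1,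
      ‖exp (θ • X) - ∑ k ∈ Finset.range n, ((θ ^ k / k.factorial : ℝ)) • X ^ k‖
        ≤ ‖X‖ ^ n * θ ^ n / n.factorial := by
  intro n
  induction n with
  | zero =>
    intro θ hθ
    simpa using hX θ hθ
  | succ n ih =>
    intro θ hθ
    obtain ⟨hθ0, hθ1⟩ := hθ
    -- the function and its derivative
    set f : ℝ → A := fun t =>
      exp (t • X) - ∑ k ∈ Finset.range (n + 1), ((t ^ k / k.factorial : ℝ)) • X ^ k with hf
    set f' : ℝ → A := fun t =>
      X * (exp (t • X) - ∑ k ∈ Finset.range n, ((t ^ k / k.factorial : ℝ)) • X ^ k) with hf'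
    have hderiv : ∀ t : ℝ, HasDerivAt f (f' t) t := by
      intro t
      have h1 : HasDerivAt (fun u : ℝ => exp (u • X)) (X * exp (t • X)) t := by
        have hcoe : ∀ u : ℝ, (u : ℂ) • X = u • X := fun u => by
          rw [← algebraMap_smul ℂ u X]; norm_num
        have := HasDerivAt.scomp (x := t)
          (hasDerivAt_exp_smul_const' X (t : ℂ)) Complex.ofRealCLM.hasDerivAt
        simp only [Function.comp_def, Complex.ofRealCLM_apply, hcoe,
          Complex.ofReal_one, one_smul] at this
        simpa [hcoe] using this
      have h2 : HasDerivAt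
          (fun u : ℝ => ∑ k ∈ Finset.range (n + 1), ((u ^ k / k.factorial : ℝ)) • X ^ k)
          (X * ∑ k ∈ Finset.range n, ((t ^ k / k.factorial : ℝ)) • X ^ k) t := by
        have hterm : ∀ k ∈ Finset.range (n + 1), HasDerivAt
            (fun u : ℝ => ((u ^ k / k.factorial : ℝ)) • X ^ k)
            (((k * t ^ (k - 1) / k.factorial : ℝ)) • X ^ k) t := by
          intro k _
          exact ((hasDerivAt_pow k t).div_const _).smul_const _
        have hsum := HasDerivAt.fun_sum hterm
        refine hsum.congr_deriv (Eq.symm ?_)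
        rw [Finset.sum_range_succ']
        simp only [Nat.cast_zero, zero_mul, zero_div, zero_smul, add_zero]
        rw [Finset.mul_sum]
        apply Finset.sum_congr rfl
        intro j _
        rw [mul_smul_comm, ← pow_succ']
        congr 1
        have : ((j + 1 : ℕ).factorial : ℝ) = (j + 1 : ℕ) * (j.factorial : ℝ) := by
          rw [Nat.factorial_succ]; push_cast; ring
        rw [this]
        have h1 : ((j + 1 : ℕ) : ℝ) ≠ 0 := by positivity
        have h2 : (j.factorial : ℝ) ≠ 0 := Nat.cast_ne_zero.2 j.factorial_ne_zero
        simp only [Nat.add_sub_cancel]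
        field_simp
      have := h1.sub h2
      refine this.congr_deriv ?_
      simp only [hf', mul_sub]
    -- f 0 = 0
    have hf0 : f 0 = 0 := by
      simp only [hf, zero_smul, exp_zero, Finset.sum_range_succ']
      simp
    -- continuity of f'
    have hcont : Continuous f' := by
      have hexp : Continuous fun t : ℝ => exp (t • X) :=
        (((continuous_iff_continuousAt.2 fun t => (hderiv t).continuousAt).add
          (show Continuous fun t : ℝ => ∑ k ∈ Finset.range (n + 1),
            ((t ^ k / k.factorial : ℝ)) • X ^ k by fun_prop)).congr fun t => by simp [hf])
      apply Continuous.mul continuous_const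
      exact hexp.sub (by continuity)
    -- FTC
    have hint : ∫ s in (0:ℝ)..θ, f' s = f θ := by
      rw [intervalIntegral.integral_eq_sub_of_hasDerivAt (fun t _ => hderiv t)
        (hcont.intervalIntegrable 0 θ), hf0, sub_zero]
    have hbound : ‖∫ s in (0:ℝ)..θ, f' s‖
        ≤ |∫ s in (0:ℝ)..θ, (‖X‖ ^ (n + 1) / n.factorial) * s ^ n| := by
      apply intervalIntegral.norm_integral_le_abs_of_norm_le
      · refine (MeasureTheory.ae_restrict_iff' measurableSet_uIoc).2
          (Filter.Eventually.of_forall fun s hs => ?_)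
        rw [Set.uIoc_of_le hθ0] at hs
        have hs0 : 0 ≤ s := le_of_lt hs.1
        have hs1 : s ≤ 1 := le_trans hs.2 hθ1
        have h1 : ‖f' s‖ ≤ ‖X‖ * ‖exp (s • X) -
            ∑ k ∈ Finset.range n, ((s ^ k / k.factorial : ℝ)) • X ^ k‖ := norm_mul_le _ _
        have h2 := ih s ⟨hs0, hs1⟩
        calc ‖f' s‖ ≤ ‖X‖ * (‖X‖ ^ n * s ^ n / n.factorial) :=
              h1.trans (mul_le_mul_of_nonneg_left h2 (norm_nonneg X))
          _ = (‖X‖ ^ (n + 1) / n.factorial) * s ^ n := by ring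
      · exact ((continuous_const.mul (continuous_pow n)).intervalIntegrable 0 θ)
    have hcalc : ∫ s in (0:ℝ)..θ, (‖X‖ ^ (n + 1) / n.factorial) * s ^ n
        = ‖X‖ ^ (n + 1) * θ ^ (n + 1) / (n + 1).factorial := by
      rw [intervalIntegral.integral_const_mul, integral_pow, Nat.factorial_succ]
      push_cast
      rw [zero_pow (Nat.succ_ne_zero n), sub_zero]
      have h2 : (n.factorial : ℝ) ≠ 0 := Nat.cast_ne_zero.2 n.factorial_ne_zero
      have h3 : ((n : ℝ) + 1) ≠ 0 := by positivity
      field_simp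
    rw [hint, hcalc] at hbound
    rw [abs_of_nonneg (by positivity)] at hbound
    simpa using hbound

/-- Tail bound on the ideal evolution: if `exp(θ • X)` is a contraction for all
`θ ∈ [0,1]`, then the degree-≥4 tail of `exp X` is bounded by `‖X‖⁴ / 4!`. -/
theorem stmt_16 {A : Type*} [NormedRing A] [NormedAlgebra ℂ A]
    [CompleteSpace A] [NormOneClass A] (X : A)
    (hX : ∀ θ ∈ Set.Icc (0 : ℝ) 1, ‖exp (θ • X)‖ ≤ 1) :
    ‖exp X - ∑ k ∈ Finset.range 4, ((k.factorial : ℝ))⁻¹ • X ^ k‖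
      ≤ ‖X‖ ^ 4 / 24 := by
  have h := taylor_tail_bound X hX 4 1 ⟨zero_le_one, le_refl 1⟩
  simp only [one_pow, one_smul, mul_one, one_div] at h
  norm_num [Nat.factorial] at h ⊢
  convert h using 3
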